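/- Let (U,V) be closed subspaces of a Hilbert space H with dim(U∩V) < ∞, dim(U⊥∩V⊥) < ∞, and U + V closed. Then the orthogonal projection onto V⊥ restricted to U, P_{V⊥} : U → V⊥, is a Fredholm operator. -/

import Mathlib

noncomputable section

variable (H : Type) [NormedAddCommGroup H] [InnerProductSpace ℂ H] [CompleteSpace H]

/-- A bounded operator `T : E → F` is Fredholm: finite-dimensional kernel,
finite-dimensional cokernel, and closed range. -/
def IsFredholmMap {E F : Type} [NormedAddCommGroup E] [InnerProductSpace ℂ E]
    [NormedAddCommGroup F] [InnerProductSpace ℂ F] (T : E →L[ℂ] F) : Prop :=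
  FiniteDimensional ℂ ↥(LinearMap.ker (T : E →ₗ[ℂ] F)) ∧
  FiniteDimensional ℂ (F ⧸ LinearMap.range (T : E →ₗ[ℂ] F)) ∧
  IsClosed ((LinearMap.range (T : E →ₗ[ℂ] F) : Submodule ℂ F) : Set F)

/-- if `(U,V)` are closed subspaces of `H` with `dim (U ∩ V) < ∞`,
`dim (U⊥ ∩ V⊥) < ∞` and `U + V` closed, then the orthogonal projection onto `V⊥`
restricted to `U`, i.e. `P_{V⊥} : U → V⊥`, is Fredholm. -/
theorem projection_of_fredholm_pair_isFredholm (U V : Submodule ℂ H)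
    (hU : IsClosed (U : Set H)) (hV : IsClosed (V : Set H))
    [Submodule.HasOrthogonalProjection (Vᗮ)]
    (hfin₁ : FiniteDimensional ℂ ↥(U ⊓ V))
    (hfin₂ : FiniteDimensional ℂ ↥(Uᗮ ⊓ Vᗮ))
    (hclosed : IsClosed ((U ⊔ V : Submodule ℂ H) : Set H)) :
    IsFredholmMap ((Submodule.orthogonalProjectionOnto (Vᗮ)) ∘L U.subtypeL) := by
  haveI : CompleteSpace V := hV.completeSpace_coe
  haveI : CompleteSpace (Vᗮ : Submodule ℂ H) := (Submodule.isClosed_orthogonal V).completeSpace_coe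
  set T : U →L[ℂ] ↥(Vᗮ) := (Submodule.orthogonalProjectionOnto (Vᗮ)) ∘L U.subtypeL with hTdef
  -- KERNEL
  have hker : LinearMap.ker (T : U →ₗ[ℂ] ↥(Vᗮ)) = Submodule.comap U.subtype (U ⊓ V) := by
    ext u
    simp only [LinearMap.mem_ker, Submodule.mem_comap, Submodule.mem_inf, Submodule.coe_subtype]
    constructor
    · intro h
      refine ⟨u.2, ?_⟩
      have : (u : H) ∈ Vᗮᗮ := Submodule.orthogonalProjectionOnto_eq_zero_iff.mp h
      rwa [Submodule.orthogonal_orthogonal V] at this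
    · intro h
      exact (Submodule.orthogonalProjectionOnto_eq_zero_iff (K := Vᗮ) (v := (u : H))).mpr (V.le_orthogonal_orthogonal h.2)
  have hkerfin : FiniteDimensional ℂ ↥(LinearMap.ker (T : U →ₗ[ℂ] ↥(Vᗮ))) := by
    rw [hker]
    exact (Submodule.comapSubtypeEquivOfLe (inf_le_left : U ⊓ V ≤ U)).symm.finiteDimensional
  -- RANGE
  have hrange : LinearMap.range (T : U →ₗ[ℂ] ↥(Vᗮ)) =
      Submodule.comap (Vᗮ).subtype (U ⊔ V) := by
    ext y
    simp only [LinearMap.mem_range, Submodule.mem_comap, Submodule.coe_subtype]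
    constructor
    · rintro ⟨u, rfl⟩
      have h1 : (u : H) - Submodule.orthogonalProjectionOnto (Vᗮ) (u : H) ∈ Vᗮᗮ :=
        Submodule.sub_starProjection_mem_orthogonal (K := Vᗮ) (u : H)
      rw [Submodule.orthogonal_orthogonal V] at h1
      show ((Submodule.orthogonalProjectionOnto (Vᗮ) (u : H) : H)) ∈ U ⊔ V
      have heq : ((Submodule.orthogonalProjectionOnto (Vᗮ) (u : H) : H))
          = (u : H) - ((u : H) - (Submodule.orthogonalProjectionOnto (Vᗮ) (u : H) : H)) := by abel
      rw [heq]
      exact Submodule.sub_mem _ (Submodule.mem_sup_left u.2) (Submodule.mem_sup_right h1)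
    · intro hy
      obtain ⟨u, hu, v, hv', huv⟩ := Submodule.mem_sup.mp hy
      refine ⟨⟨u, hu⟩, ?_⟩
      have hu' : u = (y : H) - v := by rw [← huv]; abel
      have hyfix : Submodule.orthogonalProjectionOnto (Vᗮ) ((y : H)) = y :=
        Submodule.orthogonalProjectionOnto_mem_subspace_eq_self (K := Vᗮ) y
      have hv0 : Submodule.orthogonalProjectionOnto (Vᗮ) v = 0 :=
        Submodule.orthogonalProjectionOnto_eq_zero_iff.mpr (V.le_orthogonal_orthogonal hv')
      show Submodule.orthogonalProjectionOnto (Vᗮ) u = y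
      rw [hu', map_sub, hyfix, hv0, sub_zero]
  -- CLOSED RANGE
  have hclosedrange : IsClosed ((LinearMap.range (T : U →ₗ[ℂ] ↥(Vᗮ)) :
      Submodule ℂ ↥(Vᗮ)) : Set ↥(Vᗮ)) := by
    rw [hrange]
    exact hclosed.preimage continuous_subtype_val
  -- COKERNEL
  set R : Submodule ℂ ↥(Vᗮ) := Submodule.comap (Vᗮ).subtype (U ⊔ V) with hRdef
  have hRclosed : IsClosed (R : Set ↥(Vᗮ)) := hclosed.preimage continuous_subtype_val
  haveI : CompleteSpace R := hRclosed.completeSpace_coe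
  haveI : Submodule.HasOrthogonalProjection R := inferInstance
  have hcompl : IsCompl R Rᗮ := Submodule.isCompl_orthogonal_of_hasOrthogonalProjection
  -- every element of Rᗮ lies (after coercion to H) in Uᗮ ⊓ Vᗮ
  have hmem : ∀ y : ↥(Rᗮ), ((y : ↥(Vᗮ)) : H) ∈ Uᗮ ⊓ Vᗮ := by
    intro y
    rw [Submodule.inf_orthogonal, Submodule.mem_orthogonal]
    intro w hw
    have hp : w - Submodule.orthogonalProjectionOnto V w ∈ Vᗮ :=
      Submodule.sub_starProjection_mem_orthogonal (K := V) w
    have hpW : w - (Submodule.orthogonalProjectionOnto V w : H) ∈ (U ⊔ V : Submodule ℂ H) :=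
      Submodule.sub_mem _ hw (Submodule.mem_sup_right (Submodule.orthogonalProjectionOnto V w).2)
    have hzR : (⟨w - Submodule.orthogonalProjectionOnto V w, hp⟩ : ↥(Vᗮ)) ∈ R := hpW
    have h1 : inner ℂ ((Submodule.orthogonalProjectionOnto V w : H)) (((y : ↥(Vᗮ)) : H)) = (0 : ℂ) :=
      ((y : ↥(Vᗮ)).2 : ((y : ↥(Vᗮ)) : H) ∈ Vᗮ) _ (Submodule.orthogonalProjectionOnto V w).2
    have h2 : inner ℂ ((⟨w - Submodule.orthogonalProjectionOnto V w, hp⟩ : ↥(Vᗮ))) ((y : ↥(Vᗮ))) = (0 : ℂ) :=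
      (y.2 : (y : ↥(Vᗮ)) ∈ Rᗮ) _ hzR
    rw [Submodule.coe_inner] at h2
    have : (inner ℂ w (((y : ↥(Vᗮ)) : H)) : ℂ) =
        inner ℂ ((Submodule.orthogonalProjectionOnto V w : H)) (((y : ↥(Vᗮ)) : H)) +
        inner ℂ (w - (Submodule.orthogonalProjectionOnto V w : H)) (((y : ↥(Vᗮ)) : H)) := by
      rw [← inner_add_left]
      congr 1
      abel
    rw [this, h1, h2, add_zero]
  let f : ↥(Rᗮ) →ₗ[ℂ] ↥(Uᗮ ⊓ Vᗮ) :=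
    { toFun := fun y => ⟨((y : ↥(Vᗮ)) : H), hmem y⟩
      map_add' := fun a b => by ext; simp
      map_smul' := fun c a => by ext; simp }
  have hfinj : Function.Injective f := by
    intro a b hab
    have h1 := congrArg Subtype.val hab
    exact Subtype.ext (Subtype.ext h1)
  haveI : FiniteDimensional ℂ ↥(Rᗮ) := FiniteDimensional.of_injective f hfinj
  have hcofin : FiniteDimensional ℂ (↥(Vᗮ) ⧸ LinearMap.range (T : U →ₗ[ℂ] ↥(Vᗮ))) := by
    rw [hrange]
    exact (Submodule.quotientEquivOfIsCompl R Rᗮ hcompl).symm.finiteDimensional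
  exact ⟨hkerfin, hcofin, hclosedrange⟩
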